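/- Hun(Q^n) ≤ C(n, ⌊n/2⌋). -/

import Mathlib

open Finset
open scoped Classical

variable {V : Type*} [Fintype V]

/-- Open neighborhood of a set of vertices. -/
noncomputable def nbhd (G : SimpleGraph V) (S : Finset V) : Finset V :=
  Finset.univ.filter fun w => ∃ v ∈ S, G.Adj v w

/-- Possible rabbit positions after playing the strategy `L`, starting from `S`. -/
noncomputable def rabbitFrom (G : SimpleGraph V) (S : Finset V) (L : List (Finset V)) : Finset V :=
  L.foldl (fun R H => nbhd G (R \ H)) S

/-- A strategy wins if the set of possible rabbit positions is eventually empty. -/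
def Wins (G : SimpleGraph V) (L : List (Finset V)) : Prop :=
  rabbitFrom G Finset.univ L = ∅

/-- The hunter number: minimum over winning strategies of the max number of simultaneous shots. -/
noncomputable def hunterNumber (G : SimpleGraph V) : ℕ :=
  sInf {k | ∃ L : List (Finset V), Wins G L ∧ ∀ s ∈ L, s.card ≤ k}

/-- The hypercube graph on subsets of `Fin n`: adjacent iff symmetric difference a singleton. -/
noncomputable def Q (n : ℕ) : SimpleGraph (Finset (Fin n)) where
  Adj x y := (symmDiff x y).card = 1
  symm := by
    constructor
    intro x y h
    rwa [symmDiff_comm]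
  loopless := by
    constructor
    intro x
    simp [symmDiff_self]

/-- Strict weightlex order: smaller weight, or equal weight and the minimum of the
symmetric difference belongs to the first set. -/
def wlexLt {n : ℕ} (x y : Finset (Fin n)) : Prop :=
  x.card < y.card ∨
    (x.card = y.card ∧ ∃ a ∈ x, a ∉ y ∧ ∀ b ∈ symmDiff x y, a ≤ b)

/-- `S` is an initial segment of weightlex order restricted to the class `P`. -/
def IsInitSeg {n : ℕ} (P : Finset (Fin n) → Prop) (S : Finset (Finset (Fin n))) : Prop :=
  (∀ x ∈ S, P x) ∧ ∀ x y, y ∈ S → P x → wlexLt x y → x ∈ S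

lemma nbhd_mono (G : SimpleGraph V) {S T : Finset V} (h : S ⊆ T) : nbhd G S ⊆ nbhd G T := by
  intro w hw
  simp only [nbhd, mem_filter, mem_univ, true_and] at hw ⊢
  obtain ⟨v, hv, ha⟩ := hw
  exact ⟨v, h hv, ha⟩

lemma nbhd_empty (G : SimpleGraph V) : nbhd G ∅ = ∅ := by
  simp [nbhd]

lemma rabbitFrom_mono (G : SimpleGraph V) (L : List (Finset V)) :
    ∀ {S T : Finset V}, S ⊆ T → rabbitFrom G S L ⊆ rabbitFrom G T L := by
  induction L with
  | nil => intro S T h; exact h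
  | cons H L ih =>
    intro S T h
    exact ih (nbhd_mono G (sdiff_subset_sdiff h (Finset.Subset.refl H)))

lemma mem_sdiff_classical {S H : Finset V} {v : V} (hv : v ∈ S \ H) : v ∈ S ∧ v ∉ H :=
  Finset.mem_sdiff.mp hv

lemma rabbitFrom_singleton (G : SimpleGraph V) (S H : Finset V) :
    rabbitFrom G S [H] = nbhd G (S \ H) := rfl

lemma rabbitFrom_append (G : SimpleGraph V) (S : Finset V) (L1 L2 : List (Finset V)) :
    rabbitFrom G S (L1 ++ L2) = rabbitFrom G (rabbitFrom G S L1) L2 :=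
  List.foldl_append

lemma Q_adj_card {n : ℕ} {v w : Finset (Fin n)} (h : (Q n).Adj v w) :
    w.card = v.card + 1 ∨ v.card = w.card + 1 := by
  have h1 : (symmDiff v w).card = 1 := h
  rw [symmDiff_def, Finset.sup_eq_union, Finset.card_union_of_disjoint disjoint_sdiff_sdiff] at h1
  rcases Nat.eq_zero_or_pos (v \ w).card with h0 | h0
  · have hvw : v ⊆ w := by
      rw [← Finset.sdiff_eq_empty_iff_subset]
      exact Finset.card_eq_zero.mp h0
    left
    have h2 : (w \ v).card = 1 := by omega
    rw [Finset.card_sdiff_of_subset hvw] at h2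
    have := Finset.card_le_card hvw
    omega
  · have h2 : (w \ v).card = 0 := by omega
    have hwv : w ⊆ v := by
      rw [← Finset.sdiff_eq_empty_iff_subset]
      exact Finset.card_eq_zero.mp h2
    right
    have h3 : (v \ w).card = 1 := by omega
    rw [Finset.card_sdiff_of_subset hwv] at h3
    have := Finset.card_le_card hwv
    omega

/-- The level set of weight `k` in the cube. -/
noncomputable def lvl (n k : ℕ) : Finset (Finset (Fin n)) :=
  Finset.univ.filter fun x => x.card = k

lemma lvl_card (n k : ℕ) : (lvl n k).card = n.choose k := by
  rw [lvl, ← Finset.powerset_univ, ← Finset.powersetCard_eq_filter,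
    Finset.card_powersetCard, Finset.card_univ, Fintype.card_fin]

/-- Allowed positions after `t` shots of phase 1. -/
noncomputable def good1 (n t : ℕ) : Finset (Finset (Fin n)) :=
  Finset.univ.filter fun x => ¬(x.card < t ∧ (x.card + t) % 2 = 1)

/-- Allowed positions after `t` shots of phase 2. -/
noncomputable def good2 (n t : ℕ) : Finset (Finset (Fin n)) :=
  Finset.univ.filter fun x => x.card + t ≤ n ∧ (x.card + n + t) % 2 = 0

lemma mem_lvl {n k : ℕ} {x : Finset (Fin n)} : x ∈ lvl n k ↔ x.card = k := by
  simp [lvl]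

lemma step1 {n t : ℕ} {R S : Finset (Finset (Fin n))} (hR : R ⊆ good1 n t)
    (hS : ∀ v ∈ S, v ∈ R ∧ v.card ≠ t + 1) :
    nbhd (Q n) S ⊆ good1 n (t + 1) := by
  intro w hw
  simp only [nbhd, mem_filter, mem_univ, true_and] at hw
  obtain ⟨v, hv, hadj⟩ := hw
  obtain ⟨hv1, hvl⟩ := hS v hv
  have hvR := hR hv1
  simp only [good1, mem_filter, mem_univ, true_and] at hvR ⊢
  have hc := Q_adj_card hadj
  omega

lemma step2 {n t : ℕ} (ht : t < n) {R S : Finset (Finset (Fin n))} (hR : R ⊆ good2 n t)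
    (hS : ∀ v ∈ S, v ∈ R ∧ v.card ≠ n - t) :
    nbhd (Q n) S ⊆ good2 n (t + 1) := by
  intro w hw
  simp only [nbhd, mem_filter, mem_univ, true_and] at hw
  obtain ⟨v, hv, hadj⟩ := hw
  obtain ⟨hv1, hvl⟩ := hS v hv
  have hvR := hR hv1
  simp only [good2, mem_filter, mem_univ, true_and] at hvR ⊢
  have hc := Q_adj_card hadj
  omega

lemma phase1 (n : ℕ) (t : ℕ) :
    rabbitFrom (Q n) Finset.univ ((List.range t).map fun i => lvl n (i + 1)) ⊆ good1 n t := by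
  induction t with
  | zero =>
    intro x _
    simp [good1]
  | succ t ih =>
    rw [List.range_succ, List.map_append, rabbitFrom_append, List.map_singleton, rabbitFrom_singleton]
    exact step1 ih fun v hv => ⟨(mem_sdiff_classical hv).1,
      fun h => (mem_sdiff_classical hv).2 (mem_lvl.mpr h)⟩

lemma phase2 (n : ℕ) : ∀ t, t ≤ n →
    rabbitFrom (Q n) (good2 n 0) ((List.range t).map fun i => lvl n (n - i)) ⊆ good2 n t := by
  intro t
  induction t with
  | zero => intro _; exact fun x hx => hx
  | succ t ih =>
    intro ht
    rw [List.range_succ, List.map_append, rabbitFrom_append, List.map_singleton, rabbitFrom_singleton]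
    exact step2 (show t < n by omega) (ih (by omega)) fun v hv => ⟨(mem_sdiff_classical hv).1,
      fun h => (mem_sdiff_classical hv).2 (mem_lvl.mpr h)⟩

lemma good1_subset_good2 (n : ℕ) : good1 n n ⊆ good2 n 0 := by
  intro x hx
  simp only [good1, mem_filter, mem_univ, true_and] at hx
  simp only [good2, mem_filter, mem_univ, true_and]
  have hle : x.card ≤ n := by
    have := Finset.card_le_univ x
    simpa using this
  omega

/-- $Hun(Q^n) ≤ \binom{n}{\lfloor n/2 \rfloor}$. -/
theorem hunterNumber_Q_le (n : ℕ) :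
    hunterNumber (Q n) ≤ Nat.choose n (n / 2) := by
  set L : List (Finset (Finset (Fin n))) :=
    (((List.range n).map fun i => lvl n (i + 1)) ++
      ((List.range n).map fun i => lvl n (n - i))) ++ [lvl n 0] with hL
  have hwin : Wins (Q n) L := by
    unfold Wins
    rw [hL, rabbitFrom_append, rabbitFrom_append]
    have h1 := phase1 n n
    have h2 : rabbitFrom (Q n)
        (rabbitFrom (Q n) Finset.univ ((List.range n).map fun i => lvl n (i + 1)))
        ((List.range n).map fun i => lvl n (n - i)) ⊆ good2 n n := by
      refine Finset.Subset.trans (rabbitFrom_mono _ _ ?_) (phase2 n n le_rfl)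
      exact Finset.Subset.trans h1 (good1_subset_good2 n)
    have h3 : rabbitFrom (Q n)
        (rabbitFrom (Q n) Finset.univ ((List.range n).map fun i => lvl n (i + 1)))
        ((List.range n).map fun i => lvl n (n - i)) ⊆ lvl n 0 := by
      refine Finset.Subset.trans h2 ?_
      intro x hx
      simp only [good2, mem_filter, mem_univ, true_and] at hx
      simp only [lvl, mem_filter, mem_univ, true_and]
      omega
    rw [rabbitFrom_singleton, Finset.eq_empty_iff_forall_notMem]
    intro w hw
    simp only [nbhd, mem_filter, mem_univ, true_and] at hw
    obtain ⟨v, hv, -⟩ := hw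
    exact (mem_sdiff_classical hv).2 (h3 (mem_sdiff_classical hv).1)
  have hcard : ∀ s ∈ L, s.card ≤ Nat.choose n (n / 2) := by
    intro s hs
    have : ∃ k, s = lvl n k := by
      rw [hL] at hs
      simp only [List.mem_append, List.mem_map, List.mem_range, List.mem_singleton] at hs
      rcases hs with (⟨i, _, rfl⟩ | ⟨i, _, rfl⟩) | rfl
      · exact ⟨i + 1, rfl⟩
      · exact ⟨n - i, rfl⟩
      · exact ⟨0, rfl⟩
    obtain ⟨k, rfl⟩ := this
    rw [lvl_card]
    exact Nat.choose_le_middle k n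
  exact Nat.sInf_le ⟨L, hwin, hcard⟩
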